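/- arXiv:1511.08428 — 6 statements merged into one kernel-verified Lean document; each statement's English description precedes it below -/
import Mathlib

section
/- Let a be a nonzero real number, ℓ a positive integer, and a₁, a₂, …, a_{2ℓ−1} any sequence of 2ℓ−1 real numbers (not necessarily distinct). Then there exist indices i₁ < i₂ < … < i_ℓ such that a_{i_s} − a_{i_t} ≠ a for all 1 ≤ s, t ≤ ℓ. -/
theorem smallest_nonresidue_stmt0 (a : ℝ) (ha : a ≠ 0) (ℓ : ℕ) (hℓ : 0 < ℓ)
    (f : Fin (2 * ℓ - 1) → ℝ) :
    ∃ s : Finset (Fin (2 * ℓ - 1)), s.card = ℓ ∧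
      ∀ i ∈ s, ∀ j ∈ s, f i - f j ≠ a := by
  set g : Fin (2 * ℓ - 1) → ℤ := fun i => ⌊f i / a⌋ with hg
  -- if f i - f j = a then g i = g j + 1
  have key : ∀ i j, f i - f j = a → g i = g j + 1 := by
    intro i j h
    have : f i / a = f j / a + 1 := by
      field_simp
      linarith
    simp [hg, this, Int.floor_add_one]
  have hind : ∀ (b : Bool), ∀ i, (Even (g i) ↔ b = true) →
      ∀ j, (Even (g j) ↔ b = true) → f i - f j ≠ a := by
    intro b i hi j hj h
    have := key i j h
    rw [this, Int.even_add_one] at hi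
    tauto
  classical
  set s0 := Finset.univ.filter (fun i => Even (g i)) with hs0
  set s1 := Finset.univ.filter (fun i => ¬ Even (g i)) with hs1
  have hcard : s0.card + s1.card = 2 * ℓ - 1 := by
    rw [hs0, hs1, Finset.card_filter_add_card_filter_not]
    simp
  have hbig : ℓ ≤ s0.card ∨ ℓ ≤ s1.card := by omega
  rcases hbig with hb | hb
  · obtain ⟨t, hts, htc⟩ := Finset.exists_subset_card_eq hb
    refine ⟨t, htc, fun i hi j hj => ?_⟩
    have hi' := Finset.mem_filter.mp (hts hi)
    have hj' := Finset.mem_filter.mp (hts hj)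
    exact hind true i (by simp [hi'.2]) j (by simp [hj'.2])
  · obtain ⟨t, hts, htc⟩ := Finset.exists_subset_card_eq hb
    refine ⟨t, htc, fun i hi j hj => ?_⟩
    have hi' := Finset.mem_filter.mp (hts hi)
    have hj' := Finset.mem_filter.mp (hts hj)
    exact hind false i (by simp [hi'.2]) j (by simp [hj'.2])
end

section
/- Let q be a prime, u a real number with u > 1, and a an integer with a ≢ 0 (mod q). Let a₁, …, a_t be a sequence of t ≥ 2uq/(q−1) integers (not necessarily distinct). Then there exist an integer ℓ ≥ u and indices i₁ < i₂ < … < i_ℓ such that a_{i_v} − a_{i_w} ≢ a (mod q) for all 1 ≤ v, w ≤ ℓ. -/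
theorem smallest_nonresidue_stmt2 (q : ℕ) (hq : q.Prime) (u : ℝ) (hu : 1 < u)
    (a : ℤ) (ha : ¬ (q : ℤ) ∣ a) (t : ℕ)
    (ht : (t : ℝ) ≥ 2 * u * q / (q - 1)) (f : Fin t → ℤ) :
    ∃ ℓ : ℕ, u ≤ (ℓ : ℝ) ∧ ∃ g : Fin ℓ → Fin t, StrictMono g ∧
      ∀ v w : Fin ℓ, ¬ (f (g v) - f (g w) ≡ a [ZMOD (q : ℤ)]) := by
  have hq2 : 2 ≤ q := hq.two_le
  haveI : Fact q.Prime := ⟨hq⟩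
  set m := q / 2 with hm
  set b : ZMod q := (a : ZMod q) with hb
  have hb0 : b ≠ 0 := by
    simpa [hb, ZMod.intCast_zmod_eq_zero_iff_dvd] using ha
  set c : Fin t → ZMod q := fun i => (f i : ZMod q) * b⁻¹ with hc
  set N : ZMod q → ℕ := fun j => (Finset.univ.filter
      (fun i : Fin t => ∃ k < m, c i = j + 2 * (k : ZMod q))).card with hN
  -- each x lies in exactly m of the sets
  have hcover : ∀ x : ZMod q,
      (Finset.univ.filter (fun j : ZMod q => ∃ k < m, x = j + 2 * (k : ZMod q))).card = m := by
    intro x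
    have : (Finset.univ.filter (fun j : ZMod q => ∃ k < m, x = j + 2 * (k : ZMod q)))
        = (Finset.range m).image (fun k : ℕ => x - 2 * (k : ZMod q)) := by
      ext j
      simp only [Finset.mem_filter, Finset.mem_univ, true_and, Finset.mem_image,
        Finset.mem_range]
      constructor
      · rintro ⟨k, hk, hkeq⟩
        exact ⟨k, hk, by rw [hkeq]; ring⟩
      · rintro ⟨k, hk, hkeq⟩
        exact ⟨k, hk, by rw [← hkeq]; ring⟩
    rw [this, Finset.card_image_of_injOn, Finset.card_range]
    intro k₁ hk₁ k₂ hk₂ heq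
    simp only [Finset.mem_coe, Finset.mem_range] at hk₁ hk₂
    have h2 : ((2 * k₁ : ℕ) : ZMod q) = ((2 * k₂ : ℕ) : ZMod q) := by
      push_cast
      linear_combination -heq
    have hv := congrArg ZMod.val h2
    rw [ZMod.val_natCast_of_lt (by omega), ZMod.val_natCast_of_lt (by omega)] at hv
    omega
  have hsum : ∑ j : ZMod q, N j = t * m := by
    have : ∑ j : ZMod q, N j
        = ∑ i : Fin t, (Finset.univ.filter
            (fun j : ZMod q => ∃ k < m, c i = j + 2 * (k : ZMod q))).card := by
      simp only [hN, Finset.card_filter]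
      rw [Finset.sum_comm]
    rw [this]
    simp only [hcover]
    simp [Finset.sum_const, Finset.card_univ]
  have hq1R : (2 : ℝ) ≤ (q : ℝ) := by exact_mod_cast hq2
  have hmR : ((q : ℝ) - 1) / 2 ≤ (m : ℝ) := by
    have h1 : q ≤ 2 * m + 1 := by omega
    have h2 : (q : ℝ) ≤ 2 * m + 1 := by exact_mod_cast h1
    linarith
  have htm : u * q ≤ (t : ℝ) * m := by
    have hden : (0 : ℝ) < (q : ℝ) - 1 := by linarith
    have h0 : (0 : ℝ) ≤ 2 * u * q / ((q : ℝ) - 1) := by positivity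
    calc u * q = (2 * u * q / ((q : ℝ) - 1)) * (((q : ℝ) - 1) / 2) := by
          field_simp
      _ ≤ (t : ℝ) * m := by
          apply mul_le_mul ht hmR (by linarith) (le_trans h0 ht)
  have key : ∃ j : ZMod q, u ≤ (N j : ℝ) := by
    by_contra h
    push_neg at h
    have hlt : ∑ j : ZMod q, (N j : ℝ) < ∑ _j : ZMod q, u :=
      Finset.sum_lt_sum_of_nonempty Finset.univ_nonempty (fun j _ => h j)
    rw [Finset.sum_const, Finset.card_univ, ZMod.card] at hlt
    have : ((∑ j : ZMod q, N j : ℕ) : ℝ) = (t : ℝ) * m := by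
      rw [hsum]; push_cast; ring
    rw [Nat.cast_sum] at this
    rw [this] at hlt
    rw [nsmul_eq_mul] at hlt
    nlinarith [htm]
  obtain ⟨j, hj⟩ := key
  set s : Finset (Fin t) := Finset.univ.filter
      (fun i : Fin t => ∃ k < m, c i = j + 2 * (k : ZMod q)) with hs
  refine ⟨s.card, by exact_mod_cast hj, fun k => s.orderEmbOfFin rfl k,
    (s.orderEmbOfFin rfl).strictMono, ?_⟩
  intro v w hvw
  have hv : (s.orderEmbOfFin rfl v : Fin t) ∈ s := Finset.orderEmbOfFin_mem s rfl v
  have hw : (s.orderEmbOfFin rfl w : Fin t) ∈ s := Finset.orderEmbOfFin_mem s rfl w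
  obtain ⟨-, k₁, hk₁, he₁⟩ := Finset.mem_filter.mp hv
  obtain ⟨-, k₂, hk₂, he₂⟩ := Finset.mem_filter.mp hw
  -- from ModEq get cast equality
  have hcast : ((f (s.orderEmbOfFin rfl v) - f (s.orderEmbOfFin rfl w) : ℤ) : ZMod q) = b := by
    rw [hb]
    exact_mod_cast (ZMod.intCast_eq_intCast_iff _ _ _).mpr hvw
  have hdiff : c (s.orderEmbOfFin rfl v) - c (s.orderEmbOfFin rfl w) = 1 := by
    rw [hc]
    simp only
    rw [← sub_mul]
    push_cast at hcast ⊢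
    rw [hcast, mul_inv_cancel₀ hb0]
  rw [he₁, he₂] at hdiff
  have h2 : ((2 * k₁ : ℕ) : ZMod q) = ((2 * k₂ + 1 : ℕ) : ZMod q) := by
    push_cast
    linear_combination hdiff
  have hv2 := congrArg ZMod.val h2
  rw [ZMod.val_natCast_of_lt (by omega), ZMod.val_natCast_of_lt (by omega)] at hv2
  omega
end

section
/- Let p₁, …, p_r be prime numbers and b = (b₁, …, b_r) with each b_i a nonzero element of ℤ/p_iℤ. Let t be an integer with t > 2^r · ∏_{i : p_i > 2} p_i/(p_i − 1), and let a₁, …, a_t be a sequence of t elements of ℤ/p₁ℤ × ⋯ × ℤ/p_rℤ. Then there exist indices i < j such that for every coordinate k, the k-th coordinate of a_j − a_i is not equal to b_k. -/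
private def sAux (P : ℕ) : ℕ := if P = 2 then 1 else (P - 1) / 2

private lemma smallest_nonresidue_aux (P : ℕ) (hP : P.Prime) (j j' e : ℕ)
    (hj : j < sAux P) (hj' : j' < sAux P) (he : e ≤ 1)
    (h : ((2 * j' : ℕ) : ZMod P) = ((2 * j + e : ℕ) : ZMod P)) :
    2 * j' = 2 * j + e := by
  have h2 := hP.two_le
  have hlt : 2 * j' < P ∧ 2 * j + e < P := by
    unfold sAux at hj hj'
    rcases eq_or_ne P 2 with rfl | h2p
    · rw [if_pos rfl] at hj hj'; omega
    · rw [if_neg h2p] at hj hj'; omega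
  have hmod := (ZMod.natCast_eq_natCast_iff _ _ _).mp h
  have hmm : (2 * j') % P = (2 * j + e) % P := hmod
  rwa [Nat.mod_eq_of_lt hlt.1, Nat.mod_eq_of_lt hlt.2] at hmm

private lemma sAux_real (P : ℕ) (hP : P.Prime) :
    2 * (if 2 < P then (P : ℝ) / ((P : ℝ) - 1) else 1) * (sAux P : ℝ) = P := by
  rcases eq_or_ne P 2 with rfl | h2
  · norm_num [sAux]
  · have h3 : 2 < P := lt_of_le_of_ne hP.two_le (Ne.symm h2)
    have hodd : P % 2 = 1 := Nat.odd_iff.mp (hP.odd_of_ne_two h2)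
    set m := (P - 1) / 2 with hm
    have hPm : P = 2 * m + 1 := by omega
    have hsm : sAux P = m := by unfold sAux; rw [if_neg h2]
    have hm1 : 1 ≤ m := by omega
    rw [if_pos h3, hsm, hPm]
    have hmR : (1 : ℝ) ≤ (m : ℝ) := by exact_mod_cast hm1
    push_cast
    have h2m : (2 * (m : ℝ) + 1) - 1 = 2 * m := by ring
    rw [h2m]
    field_simp

theorem smallest_nonresidue_stmt4 (r : ℕ) (p : Fin r → ℕ) (hp : ∀ i, (p i).Prime)
    (b : ∀ i, ZMod (p i)) (hb : ∀ i, b i ≠ 0) (t : ℕ)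
    (ht : (t : ℝ) > 2 ^ r *
      ∏ i ∈ Finset.univ.filter (fun i => 2 < p i), (p i : ℝ) / ((p i : ℝ) - 1))
    (a : Fin t → ∀ i, ZMod (p i)) :
    ∃ i j : Fin t, i < j ∧ ∀ k, (a j - a i) k ≠ b k := by
  classical
  haveI hfact : ∀ i, Fact (p i).Prime := fun i => ⟨hp i⟩
  haveI hnz : ∀ i, NeZero (p i) := fun i => ⟨(hp i).pos.ne'⟩
  by_contra hcon
  push_neg at hcon
  -- hcon : ∀ i j, i < j → ∃ k, (a j - a i) k = b k
  set F : Fin t → Finset (∀ k, ZMod (p k)) := fun i =>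
    Fintype.piFinset fun k => (Finset.range (sAux (p k))).image
      (fun j => a i k - ((2 * j : ℕ) : ZMod (p k)) * b k) with hFdef
  have hFcard : ∀ i, (F i).card = ∏ k, sAux (p k) := by
    intro i
    rw [hFdef]
    rw [Fintype.card_piFinset]
    refine Finset.prod_congr rfl fun k _ => ?_
    rw [Finset.card_image_of_injOn, Finset.card_range]
    intro j hj j' hj' hjj'
    simp only [Finset.coe_range, Set.mem_Iio] at hj hj'
    have h2 : ((2 * j : ℕ) : ZMod (p k)) = ((2 * j' : ℕ) : ZMod (p k)) :=
      mul_right_cancel₀ (hb k) (sub_right_injective hjj')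
    have := smallest_nonresidue_aux (p k) (hp k) j j' 0 hj hj' (by omega) h2.symm
    omega
  have hdisj : ∀ i ∈ (Finset.univ : Finset (Fin t)), ∀ i' ∈ Finset.univ, i ≠ i' →
      Disjoint (F i) (F i') := by
    have key : ∀ i i' : Fin t, i < i' → Disjoint (F i) (F i') := by
      intro i i' hii'
      rw [Finset.disjoint_left]
      intro c hc hc'
      obtain ⟨k, hk⟩ := hcon i i' hii'
      have h1 := Fintype.mem_piFinset.mp hc k
      have h2 := Fintype.mem_piFinset.mp hc' k
      simp only [Finset.mem_image, Finset.mem_range] at h1 h2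
      obtain ⟨j, hj, hje⟩ := h1
      obtain ⟨j', hj', hje'⟩ := h2
      have hk' : a i' k - a i k = b k := hk
      have heq : ((2 * j' : ℕ) : ZMod (p k)) * b k
          = ((2 * j + 1 : ℕ) : ZMod (p k)) * b k := by
        push_cast
        push_cast at hje hje'
        linear_combination hje - hje' + hk'
      have := smallest_nonresidue_aux (p k) (hp k) j j' 1 hj hj' le_rfl
        (mul_right_cancel₀ (hb k) heq)
      omega
    intro i _ i' _ hne
    rcases lt_or_gt_of_ne hne with h | h
    · exact key i i' h
    · exact (key i' i h).symm
  have hcount : t * ∏ k, sAux (p k) ≤ ∏ k, p k := by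
    have h1 := Finset.card_biUnion hdisj
    have h2 : (Finset.univ.biUnion F).card ≤ Fintype.card (∀ k, ZMod (p k)) :=
      Finset.card_le_univ _
    rw [h1] at h2
    simp only [hFcard, Finset.sum_const, Finset.card_univ, Fintype.card_fin,
      smul_eq_mul, Fintype.card_pi, ZMod.card] at h2
    exact h2
  have hkey : (2 ^ r * ∏ i ∈ Finset.univ.filter (fun i => 2 < p i),
      (p i : ℝ) / ((p i : ℝ) - 1)) * ∏ k, (sAux (p k) : ℝ) = ∏ k, (p k : ℝ) := by
    rw [Finset.prod_filter]
    rw [show (2 : ℝ) ^ r = ∏ _k : Fin r, (2 : ℝ) by simp]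
    rw [← Finset.prod_mul_distrib, ← Finset.prod_mul_distrib]
    exact Finset.prod_congr rfl fun k _ => sAux_real (p k) (hp k)
  have hs1 : ∀ k, 1 ≤ sAux (p k) := by
    intro k
    have := (hp k).two_le
    unfold sAux
    split <;> omega
  have hspos : (0 : ℝ) < ∏ k, (sAux (p k) : ℝ) :=
    Finset.prod_pos fun k _ => by exact_mod_cast hs1 k
  have hnat : (t : ℝ) * ∏ k, (sAux (p k) : ℝ) ≤ ∏ k, (p k : ℝ) := by
    exact_mod_cast hcount
  have hgt := mul_lt_mul_of_pos_right ht hspos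
  rw [hkey] at hgt
  linarith
end

section
/- Let p be a prime and p₁, …, p_r distinct prime divisors of p − 1. Let n be an integer coprime to p that is simultaneously a p_i-th power nonresidue modulo p for each i = 1, …, r. Let d₁ < d₂ < ⋯ < d_t be divisors of n with t > 2^r · ∏_{i : p_i > 2} p_i/(p_i − 1). Then there exist indices i < j such that n·d_i/d_j is also simultaneously a p₁, …, p_r-th power nonresidue modulo p. -/
open Finset

theorem combo {r t : ℕ} (q : Fin r → ℕ) (hq : ∀ k, (q k).Prime)
    (a : (k : Fin r) → ZMod (q k)) (ha : ∀ k, a k ≠ 0)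
    (w : Fin t → (k : Fin r) → ZMod (q k))
    (ht : (t : ℝ) > 2 ^ r * ∏ k ∈ Finset.univ.filter (fun k => 2 < q k),
        (q k : ℝ) / ((q k : ℝ) - 1)) :
    ∃ i j : Fin t, i < j ∧ ∀ k, w j k ≠ w i k + a k := by
  classical
  haveI hNZ : ∀ k, NeZero (q k) := fun k => ⟨(hq k).pos.ne'⟩
  set mk : Fin r → ℕ := fun k => if q k = 2 then 1 else (q k - 1) / 2 with hmkdef
  have hmk2 : ∀ k, 2 * mk k ≤ q k := by
    intro k
    have := (hq k).two_le
    simp only [hmkdef]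
    split <;> omega
  have hmk1 : ∀ k, 1 ≤ mk k := by
    intro k
    have := (hq k).two_le
    simp only [hmkdef]
    split
    · omega
    · rename_i h; omega
  have hmkodd : ∀ k, q k ≠ 2 → 2 * mk k = q k - 1 := by
    intro k h
    obtain ⟨j, hj⟩ := (hq k).odd_of_ne_two h
    simp only [hmkdef, if_neg h]
    omega
  set A : Fin t → ∀ k, Finset (ZMod (q k)) :=
    fun i k => (range (mk k)).image fun m => w i k - (2 * m : ℕ) * a k with hAdef
  have cardA : ∀ i k, (A i k).card = mk k := by
    intro i k
    rw [hAdef]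
    rw [Finset.card_image_of_injOn, card_range]
    intro m hm m' hm' hEq
    simp only [coe_range, Set.mem_Iio] at hm hm'
    have h1 : ((2 * m : ℕ) : ZMod (q k)) * a k = ((2 * m' : ℕ) : ZMod (q k)) * a k :=
      sub_right_injective hEq
    haveI := Fact.mk (hq k)
    have h2 : (((2 * (m : ℤ) - 2 * m') : ℤ) : ZMod (q k)) * a k = 0 := by
      push_cast
      push_cast at h1
      linear_combination h1
    rcases mul_eq_zero.mp h2 with h | h
    · have h3 := (ZMod.intCast_zmod_eq_zero_iff_dvd _ _).mp h
      have h4 := Int.natAbs_dvd_natAbs.mpr h3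
      simp only [Int.natAbs_natCast] at h4
      have h5 := hmk2 k
      have h6 : (2 * (m : ℤ) - 2 * m').natAbs < q k := by omega
      have := Nat.eq_zero_of_dvd_of_lt h4 h6
      omega
    · exact absurd h (ha k)
  set S : (∀ k, ZMod (q k)) → Finset (Fin t) :=
    fun c => univ.filter (fun i => c ∈ Fintype.piFinset (A i)) with hSdef
  have key : ∃ c : ∀ k, ZMod (q k), 1 < (S c).card := by
    by_contra hle
    push_neg at hle
    have hsum1 : ∑ c : ∀ k, ZMod (q k), (S c).card = t * ∏ k, mk k := by
      calc ∑ c : ∀ k, ZMod (q k), (S c).card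
          = ∑ c : ∀ k, ZMod (q k), ∑ i : Fin t,
              (if c ∈ Fintype.piFinset (A i) then 1 else 0) := by
            refine Finset.sum_congr rfl fun c _ => ?_
            rw [hSdef]
            exact Finset.card_filter _ _
        _ = ∑ i : Fin t, ∑ c : ∀ k, ZMod (q k),
              (if c ∈ Fintype.piFinset (A i) then 1 else 0) := Finset.sum_comm
        _ = ∑ i : Fin t, (Fintype.piFinset (A i)).card := by
            refine Finset.sum_congr rfl fun i _ => ?_
            rw [Finset.sum_ite_mem, Finset.univ_inter, Finset.sum_const, smul_eq_mul, mul_one]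
        _ = ∑ i : Fin t, ∏ k, mk k := by
            refine Finset.sum_congr rfl fun i _ => ?_
            rw [Fintype.card_piFinset]
            exact Finset.prod_congr rfl fun k _ => cardA i k
        _ = t * ∏ k, mk k := by
            rw [Finset.sum_const, Finset.card_univ, Fintype.card_fin, smul_eq_mul]
    have hsum2 : ∑ c : ∀ k, ZMod (q k), (S c).card ≤ ∏ k, q k := by
      calc ∑ c : ∀ k, ZMod (q k), (S c).card ≤ ∑ _c : ∀ k, ZMod (q k), 1 :=
            Finset.sum_le_sum fun c _ => hle c
        _ = Fintype.card (∀ k, ZMod (q k)) := by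
            rw [Finset.sum_const, Finset.card_univ, smul_eq_mul, mul_one]
        _ = ∏ k, q k := by simp [ZMod.card]
    have hnat : t * ∏ k, mk k ≤ ∏ k, q k := hsum1 ▸ hsum2
    have hMpos : (0:ℝ) < ∏ k, (mk k : ℝ) := by
      refine Finset.prod_pos fun k _ => ?_
      have := hmk1 k
      positivity
    have hQeq : (∏ k, (q k : ℝ)) = (2 ^ r * ∏ k ∈ univ.filter (fun k => 2 < q k),
        (q k : ℝ) / ((q k : ℝ) - 1)) * ∏ k, (mk k : ℝ) := by
      rw [Finset.prod_filter]
      rw [show (2:ℝ) ^ r = ∏ _k : Fin r, (2:ℝ) by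
        rw [Finset.prod_const, Finset.card_univ, Fintype.card_fin]]
      rw [← Finset.prod_mul_distrib, ← Finset.prod_mul_distrib]
      refine Finset.prod_congr rfl fun k _ => ?_
      rcases eq_or_ne (q k) 2 with h | h
      · have : ¬ (2 < q k) := by omega
        simp [hmkdef, h, this]
      · have h3 : 2 < q k := lt_of_le_of_ne (hq k).two_le (Ne.symm h)
        have hm : 2 * mk k = q k - 1 := hmkodd k h
        have hcast : 2 * (mk k : ℝ) = (q k : ℝ) - 1 := by
          have : ((2 * mk k : ℕ) : ℝ) = ((q k - 1 : ℕ) : ℝ) := by rw [hm]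
          push_cast [Nat.cast_sub (hq k).one_le] at this
          linarith
        have hne : (q k : ℝ) - 1 ≠ 0 := by
          have : (2:ℝ) < (q k : ℝ) := by exact_mod_cast h3
          linarith
        rw [if_pos h3, show (mk k : ℝ) = ((q k : ℝ) - 1) / 2 by linarith]
        field_simp
    have hcast2 : (t : ℝ) * ∏ k, (mk k : ℝ) ≤ ∏ k, (q k : ℝ) := by
      exact_mod_cast hnat
    rw [hQeq] at hcast2
    have := (mul_le_mul_iff_of_pos_right hMpos).mp hcast2
    linarith
  obtain ⟨c, hc⟩ := key
  rw [Finset.one_lt_card] at hc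
  obtain ⟨i, hi, j, hj, hij⟩ := hc
  have hmem : ∀ x ∈ S c, ∀ k, ∃ m, m < mk k ∧ w x k = c k + (2 * m : ℕ) * a k := by
    intro x hx k
    rw [hSdef, Finset.mem_filter] at hx
    have := (Fintype.mem_piFinset.mp hx.2) k
    rw [hAdef, Finset.mem_image] at this
    obtain ⟨m, hm, hEq⟩ := this
    rw [Finset.mem_range] at hm
    exact ⟨m, hm, by rw [← hEq]; ring⟩
  have main : ∀ x ∈ S c, ∀ y ∈ S c, ∀ k, w y k ≠ w x k + a k := by
    intro x hx y hy k hcontra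
    obtain ⟨m, hm, hx'⟩ := hmem x hx k
    obtain ⟨m', hm', hy'⟩ := hmem y hy k
    rw [hx', hy'] at hcontra
    haveI := Fact.mk (hq k)
    have h2 : (((2 * (m' : ℤ) - 2 * m - 1) : ℤ) : ZMod (q k)) * a k = 0 := by
      push_cast
      push_cast at hcontra
      linear_combination hcontra
    rcases mul_eq_zero.mp h2 with h | h
    · have h3 := (ZMod.intCast_zmod_eq_zero_iff_dvd _ _).mp h
      have h4 := Int.natAbs_dvd_natAbs.mpr h3
      simp only [Int.natAbs_natCast] at h4
      have h5 := hmk2 k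
      have h6 : (2 * (m' : ℤ) - 2 * m - 1).natAbs < q k := by omega
      have h7 : (2 * (m' : ℤ) - 2 * m - 1).natAbs ≠ 0 := by omega
      have := Nat.le_of_dvd (Nat.pos_of_ne_zero h7) h4
      omega
    · exact absurd h (ha k)
  rcases lt_trichotomy i j with h | h | h
  · exact ⟨i, j, h, fun k => main i hi j hj k⟩
  · exact absurd h hij
  · exact ⟨j, i, h, fun k => main j hj i hi k⟩

theorem res_iff (p : ℕ) [Fact p.Prime] (g : (ZMod p)ˣ)
    (hgpow : ∀ x : (ZMod p)ˣ, ∃ m : ℕ, g ^ m = x)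
    (horder : orderOf g = p - 1)
    (Q : ℕ) (hQ : Q.Prime) (hQd : Q ∣ p - 1)
    (u : (ZMod p)ˣ) (m : ℕ) (hm : g ^ m = u) :
    (∃ x : ZMod p, x ^ Q = (u : ZMod p)) ↔ (m : ZMod Q) = 0 := by
  haveI := Fact.mk hQ
  constructor
  · rintro ⟨x, hx⟩
    have hx0 : x ≠ 0 := by
      intro h
      rw [h, zero_pow hQ.ne_zero] at hx
      exact (u.ne_zero) hx.symm
    obtain ⟨s, hs⟩ := hgpow (Units.mk0 x hx0)
    have hpow : g ^ (s * Q) = g ^ m := by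
      rw [hm, pow_mul, hs]
      ext
      push_cast
      exact hx
    rw [pow_eq_pow_iff_modEq, horder] at hpow
    have h2 : s * Q ≡ m [MOD Q] := hpow.of_dvd hQd
    have h3 : (m : ZMod Q) = ((s * Q : ℕ) : ZMod Q) :=
      (ZMod.natCast_eq_natCast_iff _ _ _).mpr h2.symm
    rw [h3]
    push_cast
    simp [ZMod.natCast_self]
  · intro h
    have hdvd : Q ∣ m := (ZMod.natCast_eq_zero_iff ..).mp h
    obtain ⟨s, hs⟩ := hdvd
    refine ⟨((g ^ s : (ZMod p)ˣ) : ZMod p), ?_⟩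
    rw [← hm, hs, mul_comm Q s, pow_mul]
    push_cast
    ring

theorem smallest_nonresidue_stmt6 (p : ℕ) [Fact p.Prime] (r : ℕ) (q : Fin r → ℕ)
    (hq : ∀ i, (q i).Prime) (hqd : ∀ i, q i ∣ p - 1) (hinj : Function.Injective q)
    (n : ℕ) (hn : 0 < n) (hcop : ¬ p ∣ n)
    (hnres : ∀ i, ¬ ∃ x : ZMod p, x ^ (q i) = (n : ZMod p))
    (t : ℕ)
    (ht : (t : ℝ) > 2 ^ r *
      ∏ i ∈ Finset.univ.filter (fun i => 2 < q i), (q i : ℝ) / ((q i : ℝ) - 1))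
    (d : Fin t → ℕ) (hmono : StrictMono d) (hdvd : ∀ k, d k ∣ n) :
    ∃ i j : Fin t, i < j ∧
      ∀ k, ¬ ∃ x : ZMod p, x ^ (q k) = (n : ZMod p) * (d i : ZMod p) * ((d j : ZMod p))⁻¹ := by
  classical
  have hp : p.Prime := Fact.out
  obtain ⟨g, hg⟩ := IsCyclic.exists_generator (α := (ZMod p)ˣ)
  have horder : orderOf g = p - 1 := by
    rw [orderOf_eq_card_of_forall_mem_zpowers hg, Nat.card_eq_fintype_card, ZMod.card_units]
  have hgpow : ∀ x : (ZMod p)ˣ, ∃ m : ℕ, g ^ m = x := by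
    intro x
    obtain ⟨m, hm⟩ := (mem_powers_iff_mem_zpowers).mpr (hg x)
    exact ⟨m, hm⟩
  have hn0 : (n : ZMod p) ≠ 0 := by
    rw [Ne, ZMod.natCast_eq_zero_iff]
    exact hcop
  have hd0 : ∀ i : Fin t, (d i : ZMod p) ≠ 0 := by
    intro i
    rw [Ne, ZMod.natCast_eq_zero_iff]
    exact fun h => hcop (h.trans (hdvd i))
  set uN : (ZMod p)ˣ := Units.mk0 _ hn0 with huN
  set uD : Fin t → (ZMod p)ˣ := fun i => Units.mk0 _ (hd0 i) with huD
  obtain ⟨LN, hLN⟩ := hgpow uN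
  choose L hL using fun i => hgpow (uD i)
  -- nonresidue of n gives a k ≠ 0
  have ha : ∀ k, ((LN : ZMod (q k)) : ZMod (q k)) ≠ 0 := by
    intro k h
    exact hnres k ((res_iff p g hgpow horder (q k) (hq k) (hqd k) uN LN hLN).mpr h)
  obtain ⟨i, j, hij, hgood⟩ := combo q hq (fun k => (LN : ZMod (q k))) ha
    (fun i k => (L i : ZMod (q k))) ht
  refine ⟨i, j, hij, fun k => ?_⟩
  haveI := Fact.mk (hq k)
  set s : ℕ := q k - 1 with hsdef
  have hqs : q k = s + 1 := by
    have := (hq k).pos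
    omega
  -- the shifted unit
  have hexp : g ^ (LN + L i + s * L j) = uN * uD i * (uD j) ^ s := by
    rw [pow_add, pow_add, mul_comm s (L j), pow_mul, hLN, hL i, hL j]
  have hiff := res_iff p g hgpow horder (q k) (hq k) (hqd k) _ _ hexp
  -- shift equivalence
  have hshift : (∃ x : ZMod p, x ^ (q k) = (n : ZMod p) * (d i : ZMod p) * ((d j : ZMod p))⁻¹)
      ↔ (∃ x : ZMod p, x ^ (q k) = ((uN * uD i * (uD j) ^ s : (ZMod p)ˣ) : ZMod p)) := by
    have hval : ((uN * uD i * (uD j) ^ s : (ZMod p)ˣ) : ZMod p)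
        = (n : ZMod p) * (d i : ZMod p) * (d j : ZMod p) ^ s := by
      push_cast
      rw [huN, huD]
      simp
    rw [hval]
    constructor
    · rintro ⟨x, hx⟩
      refine ⟨x * (d j : ZMod p), ?_⟩
      rw [mul_pow, hx, hqs]
      rw [pow_succ' ((d j : ZMod p)) s]
      field_simp [hd0 j]
    · rintro ⟨x, hx⟩
      refine ⟨x * ((d j : ZMod p))⁻¹, ?_⟩
      rw [mul_pow, hx, hqs, inv_pow]
      rw [pow_succ ((d j : ZMod p)) s]
      field_simp [hd0 j]
  rw [hshift, hiff]
  -- now show cast ≠ 0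
  intro hzero
  apply hgood k
  have hs1 : ((s : ℕ) : ZMod (q k)) = -1 := by
    rw [hsdef, Nat.cast_sub (hq k).one_le, ZMod.natCast_self]
    ring
  push_cast at hzero
  rw [hs1] at hzero
  linear_combination -hzero
end

section
/- Let b be a squarefree positive integer with τ(b) ≥ 2t divisors, and let σ > 0. Define W*(b;σ) to be the number of ordered pairs (d′, d″) of distinct divisors of b with |log(d′/d″)| ≤ σ. Suppose the divisors of b cannot be arranged to contain t divisors d₁ < ⋯ < d_t with log(d_{i+1}/d_i) > σ for all i. Then τ(b)² ≤ 2·t·W*(b;σ). -/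
open Finset

noncomputable def chainLen (b : ℕ) (σ : ℝ) (d : ℕ) : ℕ :=
  1 + ((b.divisors.filter (fun e => e < d ∧ σ < Real.log ((d:ℝ) / (e:ℝ)))).attach).sup
      (fun e => chainLen b σ e.1)
  termination_by d
  decreasing_by exact (Finset.mem_filter.mp e.2).2.1

lemma chainLen_pos (b : ℕ) (σ : ℝ) (d : ℕ) : 1 ≤ chainLen b σ d := by
  rw [chainLen]; omega

lemma chainLen_lt (b : ℕ) (σ : ℝ) {e d : ℕ} (he : e ∈ b.divisors) (hed : e < d)
    (hlog : σ < Real.log ((d:ℝ) / (e:ℝ))) : chainLen b σ e < chainLen b σ d := by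
  conv_rhs => rw [chainLen]
  have hmem : e ∈ b.divisors.filter (fun e => e < d ∧ σ < Real.log ((d:ℝ) / (e:ℝ))) :=
    Finset.mem_filter.mpr ⟨he, hed, hlog⟩
  have := Finset.le_sup (f := fun x : {x // x ∈ b.divisors.filter (fun e => e < d ∧ σ < Real.log ((d:ℝ) / (e:ℝ)))} => chainLen b σ x.1)
    (Finset.mem_attach _ ⟨e, hmem⟩)
  have h2 : chainLen b σ e ≤ _ := this
  omega

lemma chainLen_chain (b : ℕ) (σ : ℝ) : ∀ d, d ∈ b.divisors →
    ∃ g : Fin (chainLen b σ d) → ℕ, StrictMono g ∧ (∀ i, g i ∣ b) ∧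
      (∀ (i : ℕ) (h : i + 1 < chainLen b σ d),
        σ < Real.log ((g ⟨i + 1, h⟩ : ℝ) / (g ⟨i, Nat.lt_of_succ_lt h⟩ : ℝ))) ∧
      ∀ (h : chainLen b σ d - 1 < chainLen b σ d), g ⟨chainLen b σ d - 1, h⟩ = d := by
  intro d
  induction d using Nat.strong_induction_on with
  | _ d ih =>
    intro hd
    by_cases hF : (b.divisors.filter (fun e => e < d ∧ σ < Real.log ((d:ℝ) / (e:ℝ)))).Nonempty
    · obtain ⟨e', he', hsup⟩ := Finset.exists_mem_eq_sup _ (hF.attach)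
        (fun x : {x // x ∈ b.divisors.filter (fun e => e < d ∧ σ < Real.log ((d:ℝ) / (e:ℝ)))} =>
          chainLen b σ x.1)
      obtain ⟨hediv, hed, helog⟩ := Finset.mem_filter.mp e'.2
      set m := chainLen b σ e'.1 with hm
      have hm1 : 1 ≤ m := chainLen_pos b σ _
      have hdm : chainLen b σ d = m + 1 := by
        rw [chainLen, hsup]; omega
      obtain ⟨g', hg'mono, hg'div, hg'gap, hg'last⟩ := ih e'.1 hed hediv
      rw [hdm]
      have hlaste : g' ⟨m - 1, by omega⟩ = e'.1 := hg'last (by omega)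
      have hle : ∀ j : Fin m, g' j ≤ e'.1 := by
        intro j
        rw [← hlaste]
        exact hg'mono.monotone (by simp [Fin.le_def]; omega)
      refine ⟨fun i => if h : i.1 < m then g' ⟨i.1, h⟩ else d, ?_, ?_, ?_, ?_⟩
      · intro i j hij
        show (if h : (i:ℕ) < m then g' ⟨i, h⟩ else d) < (if h : (j:ℕ) < m then g' ⟨j, h⟩ else d)
        rcases lt_or_ge j.1 m with hj | hj
        · have hi : i.1 < m := lt_trans (by exact hij) hj
          rw [dif_pos hi, dif_pos hj]
          exact hg'mono (by exact hij)
        · rcases lt_or_ge i.1 m with hi | hi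
          · rw [dif_pos hi, dif_neg (by omega)]
            exact lt_of_le_of_lt (hle _) hed
          · exfalso
            have h1 := i.2; have h2 := j.2
            have h3 : (i:ℕ) < (j:ℕ) := hij
            omega
      · intro i
        show (if h : (i:ℕ) < m then g' ⟨i, h⟩ else d) ∣ b
        by_cases h : i.1 < m
        · rw [dif_pos h]; exact hg'div _
        · rw [dif_neg h]; exact (Nat.mem_divisors.mp hd).1
      · intro i h
        show σ < Real.log (((if h' : i + 1 < m then g' ⟨i + 1, h'⟩ else d : ℕ) : ℝ) /
          ((if h' : i < m then g' ⟨i, h'⟩ else d : ℕ) : ℝ))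
        rcases lt_or_ge (i + 1) m with h1 | h1
        · rw [dif_pos h1, dif_pos (by omega)]
          exact hg'gap i h1
        · rw [dif_neg (by omega), dif_pos (show i < m by omega)]
          have heq : g' ⟨i, show i < m by omega⟩ = e'.1 := by
            have h2 : i = m - 1 := by omega
            subst h2
            exact hlaste
          rw [heq]
          exact helog
      · intro h
        show (if h' : m + 1 - 1 < m then g' ⟨m + 1 - 1, h'⟩ else d) = d
        rw [dif_neg (by omega)]
    · have h1 : chainLen b σ d = 1 := by
        rw [chainLen, Finset.not_nonempty_iff_eq_empty.mp hF]
        simp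
      rw [h1]
      refine ⟨fun _ => d, ?_, fun _ => (Nat.mem_divisors.mp hd).1, ?_, fun _ => rfl⟩
      · intro i j hij
        exact absurd (show (i:ℕ) < (j:ℕ) from hij) (by omega)
      · intro i h; omega

lemma chainLen_lt_t (b : ℕ) (σ : ℝ) (t : ℕ)
    (hno : ¬ ∃ d : Fin t → ℕ, StrictMono d ∧ (∀ i, d i ∣ b) ∧
      ∀ (i : ℕ) (h : i + 1 < t),
        σ < Real.log ((d ⟨i + 1, h⟩ : ℝ) / (d ⟨i, Nat.lt_of_succ_lt h⟩ : ℝ)))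
    {d : ℕ} (hd : d ∈ b.divisors) : chainLen b σ d < t := by
  by_contra hle
  push_neg at hle
  obtain ⟨g, hmono, hdiv, hgap, -⟩ := chainLen_chain b σ d hd
  exact hno ⟨fun i => g (Fin.castLE hle i), hmono.comp (Fin.strictMono_castLE hle),
    fun i => hdiv _, fun i h => hgap i (lt_of_lt_of_le h hle)⟩

lemma close_of_eq_chainLen (b : ℕ) (σ : ℝ) (hσ : 0 < σ) {d e : ℕ}
    (hd : d ∈ b.divisors) (he : e ∈ b.divisors)
    (hlen : chainLen b σ d = chainLen b σ e) (hne : d ≠ e) :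
    |Real.log ((d : ℝ) / (e : ℝ))| ≤ σ := by
  have hb0 : b ≠ 0 := (Nat.mem_divisors.mp hd).2
  have hd1 : 1 ≤ d := Nat.pos_of_mem_divisors hd
  have he1 : 1 ≤ e := Nat.pos_of_mem_divisors he
  rcases lt_or_gt_of_ne hne with hlt | hlt
  · -- d < e
    have h1 : Real.log ((e:ℝ) / d) ≤ σ := by
      by_contra hc
      push_neg at hc
      exact absurd (chainLen_lt b σ hd hlt hc) (by omega)
    have h2 : 0 ≤ Real.log ((e:ℝ) / d) := Real.log_nonneg (by
      rw [le_div_iff₀ (by exact_mod_cast hd1), one_mul]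
      exact_mod_cast hlt.le)
    have h3 : Real.log ((d:ℝ) / e) = - Real.log ((e:ℝ) / d) := by
      rw [← Real.log_inv, inv_div]
    rw [h3, abs_neg, abs_of_nonneg h2]
    exact h1
  · have h1 : Real.log ((d:ℝ) / e) ≤ σ := by
      by_contra hc
      push_neg at hc
      exact absurd (chainLen_lt b σ he hlt hc) (by omega)
    have h2 : 0 ≤ Real.log ((d:ℝ) / e) := Real.log_nonneg (by
      rw [le_div_iff₀ (by exact_mod_cast he1), one_mul]
      exact_mod_cast hlt.le)
    rw [abs_of_nonneg h2]
    exact h1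

theorem smallest_nonresidue_stmt9 (b : ℕ) (hb : Squarefree b) (σ : ℝ) (hσ : 0 < σ)
    (t : ℕ) (hτ : 2 * t ≤ b.divisors.card)
    (hno : ¬ ∃ d : Fin t → ℕ, StrictMono d ∧ (∀ i, d i ∣ b) ∧
      ∀ (i : ℕ) (h : i + 1 < t),
        σ < Real.log ((d ⟨i + 1, h⟩ : ℝ) / (d ⟨i, Nat.lt_of_succ_lt h⟩ : ℝ))) :
    b.divisors.card ^ 2 ≤ 2 * t *
      {q : ℕ × ℕ | q.1 ∣ b ∧ q.2 ∣ b ∧ q.1 ≠ q.2 ∧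
        |Real.log ((q.1 : ℝ) / (q.2 : ℝ))| ≤ σ}.ncard := by
  classical
  have hb0 : b ≠ 0 := by
    rintro rfl
    exact (by norm_num : ¬ Squarefree 0) hb
  have ht2 : 2 ≤ t := by
    by_contra hc
    push_neg at hc
    apply hno
    refine ⟨fun _ => 1, ?_, fun _ => one_dvd b, ?_⟩
    · intro i j hij
      have h1 := i.2
      have h2 := j.2
      have h3 : (i : ℕ) < (j : ℕ) := hij
      omega
    · intro i h
      omega
  set n := b.divisors.card with hn
  set P : Finset (ℕ × ℕ) := (b.divisors ×ˢ b.divisors).filter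
      (fun q => q.1 ≠ q.2 ∧ |Real.log ((q.1 : ℝ) / (q.2 : ℝ))| ≤ σ) with hP
  have hSP : {q : ℕ × ℕ | q.1 ∣ b ∧ q.2 ∣ b ∧ q.1 ≠ q.2 ∧
      |Real.log ((q.1 : ℝ) / (q.2 : ℝ))| ≤ σ} = (↑P : Set (ℕ × ℕ)) := by
    ext q
    simp only [hP, Set.mem_setOf_eq, Finset.coe_filter, Finset.mem_product,
      Nat.mem_divisors, Set.mem_setOf_eq]
    tauto
  rw [hSP, Set.ncard_coe_finset]
  set W := P.card with hW
  set J := Finset.Icc 1 (t - 1) with hJ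
  set F : ℕ → Finset ℕ := fun j => b.divisors.filter (fun d => chainLen b σ d = j) with hF
  have hmemJ : ∀ d ∈ b.divisors, chainLen b σ d ∈ J := fun d hd =>
    Finset.mem_Icc.mpr ⟨chainLen_pos b σ d, by have := chainLen_lt_t b σ t hno hd; omega⟩
  have hcard : n = ∑ j ∈ J, (F j).card := Finset.card_eq_sum_card_fiberwise hmemJ
  have hsub : J.biUnion (fun j => (F j).offDiag) ⊆ P := by
    intro q hq
    simp only [Finset.mem_biUnion] at hq
    obtain ⟨j, hj, hq⟩ := hq
    rw [Finset.mem_offDiag] at hq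
    obtain ⟨h1, h2, h3⟩ := hq
    rw [hF, Finset.mem_filter] at h1 h2
    refine Finset.mem_filter.mpr ⟨Finset.mem_product.mpr ⟨h1.1, h2.1⟩, h3, ?_⟩
    exact close_of_eq_chainLen b σ hσ h1.1 h2.1 (h1.2.trans h2.2.symm) h3
  have hdisj : ∀ x ∈ J, ∀ y ∈ J, x ≠ y → Disjoint ((F x).offDiag) ((F y).offDiag) := by
    intro x hx y hy hxy
    rw [Finset.disjoint_left]
    intro q hqx hqy
    rw [Finset.mem_offDiag] at hqx hqy
    have e1 := (Finset.mem_filter.mp hqx.1).2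
    have e2 := (Finset.mem_filter.mp hqy.1).2
    exact hxy (e1.symm.trans e2)
  have hsum : ∑ j ∈ J, ((F j).card * (F j).card - (F j).card) ≤ W := by
    calc ∑ j ∈ J, ((F j).card * (F j).card - (F j).card)
        = ∑ j ∈ J, ((F j).offDiag).card := by
          exact Finset.sum_congr rfl fun j _ => (Finset.offDiag_card _).symm
      _ = (J.biUnion (fun j => (F j).offDiag)).card := (Finset.card_biUnion hdisj).symm
      _ ≤ W := Finset.card_le_card hsub
  have hsq : ∑ j ∈ J, (F j).card ^ 2 ≤ W + n := by
    have step : ∑ j ∈ J, (F j).card ^ 2 =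
        ∑ j ∈ J, ((F j).card * (F j).card - (F j).card) + ∑ j ∈ J, (F j).card := by
      rw [← Finset.sum_add_distrib]
      refine Finset.sum_congr rfl fun j _ => ?_
      have hcc : (F j).card ≤ (F j).card * (F j).card := by
        rcases Nat.eq_zero_or_pos (F j).card with h | h
        · simp [h]
        · exact Nat.le_mul_of_pos_left _ h
      rw [pow_two]
      omega
    rw [step, ← hcard]
    exact Nat.add_le_add_right hsum n
  have hJcard : J.card = t - 1 := by
    rw [hJ, Nat.card_Icc]
    omega
  have hCS : (n : ℤ) ^ 2 ≤ ((t : ℤ) - 1) * ∑ j ∈ J, ((F j).card : ℤ) ^ 2 := by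
    have h := sq_sum_le_card_mul_sum_sq (s := J) (f := fun j => ((F j).card : ℤ))
    rw [hJcard] at h
    have hc : ((t - 1 : ℕ) : ℤ) = (t : ℤ) - 1 := by
      have : 1 ≤ t := by omega
      push_cast [this]
      ring
    rw [hc] at h
    calc (n : ℤ) ^ 2 = (∑ j ∈ J, ((F j).card : ℤ)) ^ 2 := by
          rw [hcard]; push_cast; ring
      _ ≤ _ := h
  have hfin : (n : ℤ) ^ 2 ≤ ((t : ℤ) - 1) * ((W : ℤ) + n) := by
    refine hCS.trans ?_
    have : (∑ j ∈ J, ((F j).card : ℤ) ^ 2) ≤ (W : ℤ) + n := by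
      have := hsq
      push_cast
      exact_mod_cast this
    have ht1 : (0 : ℤ) ≤ (t : ℤ) - 1 := by
      have : 1 ≤ t := by omega
      omega
    exact mul_le_mul_of_nonneg_left this ht1
  have hτ' : (2 * t : ℤ) ≤ (n : ℤ) := by exact_mod_cast hτ
  have ht2' : (2 : ℤ) ≤ (t : ℤ) := by exact_mod_cast ht2
  have hW0 : (0 : ℤ) ≤ (W : ℤ) := Int.natCast_nonneg W
  have key : ((t : ℤ) - 1) * ((n : ℤ) ^ 2) ≤ ((t : ℤ) - 1) * (2 * t * W) := by
    nlinarith [mul_le_mul_of_nonneg_left hfin (by linarith : (0:ℤ) ≤ 2 * t),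
      mul_le_mul_of_nonneg_right hτ' (by nlinarith : (0:ℤ) ≤ ((t:ℤ) - 1) * n),
      sq_nonneg ((n : ℤ))]
  have final : (n : ℤ) ^ 2 ≤ 2 * t * W :=
    le_of_mul_le_mul_left key (by linarith)
  exact_mod_cast final
end

section
/- Suppose a positive integer n has a divisor b = p₁⋯p_r (product of distinct primes) such that n/b < n^{1/(2t^c)}, and suppose n has t divisors d₁ < ⋯ < d_t with d_{j+1}/d_j ≥ n^{1/t^c} for all j, where t > 2^r. Then we reach a contradiction; i.e., no such configuration exists. -/
/-- Key lemma: if `d ∣ n`, `b ∣ n`, `b` squarefree, then `d / gcd d b ∣ n / b`. -/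
lemma div_gcd_dvd_div (n b d : ℕ) (hn : 0 < n) (hbn : b ∣ n) (hbsf : Squarefree b)
    (hdn : d ∣ n) : d / Nat.gcd d b ∣ n / b := by
  have hb0 : b ≠ 0 := fun h => by subst h; exact absurd (Nat.eq_zero_of_zero_dvd hbn) hn.ne'
  have hd0 : d ≠ 0 := fun h => by subst h; exact absurd (Nat.eq_zero_of_zero_dvd hdn) hn.ne'
  have hg : Nat.gcd d b ∣ d := Nat.gcd_dvd_left d b
  have hg0 : Nat.gcd d b ≠ 0 := fun h => hd0 (Nat.eq_zero_of_gcd_eq_zero_left h)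
  have hdq0 : d / Nat.gcd d b ≠ 0 := Nat.div_ne_zero_iff_of_dvd hg |>.mpr ⟨hd0, hg0⟩
  have hnb0 : n / b ≠ 0 := Nat.div_ne_zero_iff_of_dvd hbn |>.mpr ⟨hn.ne', hb0⟩
  rw [← Nat.factorization_le_iff_dvd hdq0 hnb0, Nat.factorization_div hg,
    Nat.factorization_div hbn, Nat.factorization_gcd hd0 hb0]
  intro p
  simp only [Finsupp.tsub_apply, Finsupp.inf_apply]
  have h1 : d.factorization p ≤ n.factorization p :=
    (Nat.factorization_le_iff_dvd hd0 hn.ne').mpr hdn p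
  have h2 : b.factorization p ≤ n.factorization p :=
    (Nat.factorization_le_iff_dvd hb0 hn.ne').mpr hbn p
  have h3 : b.factorization p ≤ 1 := hbsf.natFactorization_le_one p
  omega

theorem smallest_nonresidue_stmt18 (n b : ℕ) (hn : 0 < n) (hbn : b ∣ n)
    (hbsf : Squarefree b) (r : ℕ) (hr : r = b.primeFactors.card) (t : ℕ) (c : ℝ)
    (hsmall : ((n / b : ℕ) : ℝ) < (n : ℝ) ^ (1 / (2 * (t : ℝ) ^ c)))
    (d : Fin t → ℕ) (hmono : StrictMono d) (hdvd : ∀ i, d i ∣ n)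
    (hspace : ∀ (i : ℕ) (h : i + 1 < t),
      ((d ⟨i + 1, h⟩ : ℝ) / (d ⟨i, Nat.lt_of_succ_lt h⟩ : ℝ)) ≥ (n : ℝ) ^ (1 / (t : ℝ) ^ c))
    (ht : t > 2 ^ r) :
    False := by
  have hb0 : b ≠ 0 := fun h => by subst h; exact absurd (Nat.eq_zero_of_zero_dvd hbn) hn.ne'
  -- number of divisors of b is 2^r
  have hcard : b.divisors.card = 2 ^ r := by
    rw [Nat.card_divisors hb0, hr]
    rw [Finset.prod_congr rfl (fun p hp => ?_), Finset.prod_const]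
    rw [Nat.factorization_eq_one_of_squarefree hbsf (Nat.prime_of_mem_primeFactors hp)
      (Nat.dvd_of_mem_primeFactors hp)]
  -- pigeonhole
  have hmaps : ∀ i ∈ Finset.univ, Nat.gcd (d i) b ∈ b.divisors := by
    intro i _
    exact Nat.mem_divisors.mpr ⟨Nat.gcd_dvd_right _ _, hb0⟩
  have hlt : b.divisors.card < (Finset.univ : Finset (Fin t)).card := by
    rw [hcard, Finset.card_univ, Fintype.card_fin]; exact ht
  obtain ⟨i, -, j, -, hij, hgij⟩ :=
    Finset.exists_ne_map_eq_of_card_lt_of_maps_to hlt hmaps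
  -- wlog i < j
  wlog hlt2 : i < j generalizing i j
  · exact this j i hij.symm hgij.symm ((hij.lt_or_gt).resolve_left hlt2)
  have hd0 : ∀ k : Fin t, 0 < d k := fun k => Nat.pos_of_dvd_of_pos (hdvd k) hn
  set g := Nat.gcd (d i) b with hg
  have hgdi : g ∣ d i := Nat.gcd_dvd_left _ _
  have hgdj : g ∣ d j := hgij ▸ Nat.gcd_dvd_left _ _
  have hg0 : 0 < g := Nat.gcd_pos_of_pos_left _ (hd0 i)
  -- d j / g divides n / b
  have hdjg : d j / g ∣ n / b := hgij ▸ div_gcd_dvd_div n b (d j) hn hbn hbsf (hdvd j)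
  have hnb0 : 0 < n / b := Nat.div_pos (Nat.le_of_dvd hn hbn) (Nat.pos_of_ne_zero hb0)
  have hle1 : d j / g ≤ n / b := Nat.le_of_dvd hnb0 hdjg
  -- real inequality: d j / d i ≤ n / b
  have key : ((d j : ℝ) / (d i : ℝ)) ≤ ((n / b : ℕ) : ℝ) := by
    have h1 : (d j : ℝ) / (d i : ℝ) ≤ (d j : ℝ) / (g : ℝ) := by
      apply div_le_div_of_nonneg_left (by positivity) (by exact_mod_cast hg0)
      exact_mod_cast Nat.le_of_dvd (hd0 i) hgdi
    have h2 : (d j : ℝ) / (g : ℝ) = ((d j / g : ℕ) : ℝ) := by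
      rw [Nat.cast_div hgdj (by exact_mod_cast hg0.ne')]
    calc (d j : ℝ) / (d i : ℝ) ≤ (d j : ℝ) / (g : ℝ) := h1
      _ = ((d j / g : ℕ) : ℝ) := h2
      _ ≤ ((n / b : ℕ) : ℝ) := by exact_mod_cast hle1
  -- spacing lower bound: d j / d i ≥ n ^ (1/t^c)
  have hii : (i : ℕ) + 1 < t := Nat.lt_of_le_of_lt (Nat.succ_le_of_lt hlt2) j.isLt
  have hstep : ((d ⟨(i : ℕ) + 1, hii⟩ : ℝ) / (d ⟨(i : ℕ), Nat.lt_of_succ_lt hii⟩ : ℝ))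
      ≥ (n : ℝ) ^ (1 / (t : ℝ) ^ c) := hspace i hii
  have hie : (⟨(i : ℕ), Nat.lt_of_succ_lt hii⟩ : Fin t) = i := rfl
  have hjle : d ⟨(i : ℕ) + 1, hii⟩ ≤ d j := by
    rcases eq_or_lt_of_le (Nat.succ_le_of_lt hlt2 : (i : ℕ) + 1 ≤ (j : ℕ)) with h | h
    · exact le_of_eq (congrArg d (Fin.ext h))
    · exact (hmono (show (⟨(i : ℕ) + 1, hii⟩ : Fin t) < j from h)).le
  have hlow : (n : ℝ) ^ (1 / (t : ℝ) ^ c) ≤ (d j : ℝ) / (d i : ℝ) := by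
    refine le_trans (hie ▸ hstep).le ?_
    exact (div_le_div_iff_of_pos_right (by exact_mod_cast hd0 i)).mpr (by exact_mod_cast hjle)
  -- combine with rpow monotonicity
  have hn1 : (1 : ℝ) ≤ (n : ℝ) := by exact_mod_cast hn
  have htc : (0 : ℝ) < (t : ℝ) ^ c := Real.rpow_pos_of_pos (by exact_mod_cast Nat.lt_of_le_of_lt (Nat.zero_le _) ht) c
  have hexp : 1 / (2 * (t : ℝ) ^ c) ≤ 1 / (t : ℝ) ^ c := by
    rw [div_le_div_iff₀ (by linarith) htc]; linarith
  have : (n : ℝ) ^ (1 / (2 * (t : ℝ) ^ c)) ≤ (n : ℝ) ^ (1 / (t : ℝ) ^ c) :=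
    Real.rpow_le_rpow_of_exponent_le hn1 hexp
  linarith
end
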